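/- arXiv:2007.14764 — 3 statements merged into one kernel-verified Lean document; each statement's English description precedes it below -/
import Mathlib

section
/- Let n ≥ 2, α < 0, and m ≥ 1. Define the operator L on n-tuples u = (u_1,…,u_n) of polynomials in z_1,…,z_n by (Lu)_k = (n − α − 1) u_k + Σ_{j=1}^n ((n − α − 2) ∂u_k/∂z_j + ∂u_j/∂z_k) z_j. If u ≠ 0 has each component u_k a homogeneous polynomial of degree m, and L u = λ u for some λ ∈ ℂ, then Re λ ≥ 2(n − α − 2). (L is the complex Laplacian ∂∂* + ∂*∂ on (1,0)-forms Σ u_k dz_k of the weighted ∂-complex on the unit ball with the half hyperbolic metric and weight ψ = α log(1 − |z|²), restricted to the invariant subspace of forms with homogeneous polynomial coefficients of degree m.) -/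
open Complex MeasureTheory Finset

noncomputable section

/-- The Wirtinger derivative `∂f/∂zₖ` of a (real-differentiable) function
`f : ℂⁿ → ℂ`, namely `½(∂f/∂xₖ − i ∂f/∂yₖ)`. -/
def wirtZ {n : ℕ} (f : (Fin n → ℂ) → ℂ) (k : Fin n) (z : Fin n → ℂ) : ℂ :=
  (1 / 2 : ℂ) *
    (fderiv ℝ f z (Pi.single k 1) - Complex.I * fderiv ℝ f z (Pi.single k Complex.I))

open MvPolynomial in
lemma hasFDerivAt_mv_eval {n : ℕ} (P : MvPolynomial (Fin n) ℂ) (z : Fin n → ℂ) :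
    HasFDerivAt (fun w : Fin n → ℂ => MvPolynomial.eval w P)
      (∑ k, MvPolynomial.eval z (MvPolynomial.pderiv k P) •
        (ContinuousLinearMap.proj k : (Fin n → ℂ) →L[ℂ] ℂ)) z := by
  induction P using MvPolynomial.induction_on with
  | C a =>
      simp only [eval_C]
      refine (hasFDerivAt_const (𝕜 := ℂ) a z).congr_fderiv ?_
      ext v
      simp
  | add p q hp hq =>
      simp only [map_add]
      refine (hp.add hq).congr_fderiv ?_
      ext v
      simp [map_add, add_mul, Finset.sum_add_distrib]
  | mul_X p i hp =>
      have hx : HasFDerivAt (fun w : Fin n → ℂ => w i)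
          (ContinuousLinearMap.proj i : (Fin n → ℂ) →L[ℂ] ℂ) z :=
        (ContinuousLinearMap.proj i : (Fin n → ℂ) →L[ℂ] ℂ).hasFDerivAt
      have h := hp.mul' hx
      have h2 : HasFDerivAt (fun w : Fin n → ℂ => MvPolynomial.eval w (p * X i))
          ((MvPolynomial.eval z p) • (ContinuousLinearMap.proj i : (Fin n → ℂ) →L[ℂ] ℂ) +
            (∑ k, MvPolynomial.eval z (MvPolynomial.pderiv k p) •
              (ContinuousLinearMap.proj k : (Fin n → ℂ) →L[ℂ] ℂ)).smulRight (z i)) z := by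
        simp only [eval_mul, eval_X]
        refine h.congr_fderiv ?_
        ext v
        simp [mul_comm]
      refine h2.congr_fderiv ?_
      ext v
      classical
      simp only [ContinuousLinearMap.add_apply, ContinuousLinearMap.smul_apply,
        ContinuousLinearMap.sum_apply, ContinuousLinearMap.proj_apply,
        ContinuousLinearMap.smulRight_apply, smul_eq_mul, pderiv_mul, pderiv_X,
        map_add, map_mul, eval_X, add_mul, Finset.sum_add_distrib, Pi.single_apply,
        apply_ite (MvPolynomial.eval z), map_one, map_zero]
      simp only [mul_ite, ite_mul, mul_one, mul_zero, zero_mul, Finset.sum_ite_eq,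
        Finset.mem_univ, if_true, Finset.sum_mul]
      rw [add_comm]
      congr 1
      exact Finset.sum_congr rfl fun x _ => by ring

open MvPolynomial in
lemma wirtZ_eval {n : ℕ} (P : MvPolynomial (Fin n) ℂ) (k : Fin n) (z : Fin n → ℂ) :
    wirtZ (fun w => MvPolynomial.eval w P) k z
      = MvPolynomial.eval z (MvPolynomial.pderiv k P) := by
  classical
  have h := hasFDerivAt_mv_eval P z
  have hf : fderiv ℝ (fun w : Fin n → ℂ => MvPolynomial.eval w P) z
      = ((∑ j, MvPolynomial.eval z (MvPolynomial.pderiv j P) •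
        (ContinuousLinearMap.proj j : (Fin n → ℂ) →L[ℂ] ℂ)).restrictScalars ℝ) :=
    (h.restrictScalars ℝ).fderiv
  have happ : ∀ c : ℂ, fderiv ℝ (fun w : Fin n → ℂ => MvPolynomial.eval w P) z
      (Pi.single k c) = c * MvPolynomial.eval z (MvPolynomial.pderiv k P) := by
    intro c
    rw [hf]
    simp [ContinuousLinearMap.restrictScalars, Pi.single_apply, mul_comm]
  rw [wirtZ, happ, happ]
  have : Complex.I * (Complex.I * MvPolynomial.eval z (MvPolynomial.pderiv k P))
      = -MvPolynomial.eval z (MvPolynomial.pderiv k P) := by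
    rw [← mul_assoc, Complex.I_mul_I]; ring
  rw [this]; ring

open MvPolynomial in
lemma euler_monomial {n : ℕ} (d : Fin n →₀ ℕ) (a : ℂ) :
    ∑ j, (X j : MvPolynomial (Fin n) ℂ) * pderiv j (monomial d a)
      = C ((∑ j, d j : ℕ) : ℂ) * monomial d a := by
  classical
  have key : ∀ j : Fin n, (X j : MvPolynomial (Fin n) ℂ) * pderiv j (monomial d a)
      = C ((d j : ℕ) : ℂ) * monomial d a := by
    intro j
    rcases Nat.eq_zero_or_pos (d j) with h0 | hpos
    · simp [pderiv_monomial, h0]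
    · rw [pderiv_monomial, X, monomial_mul, C_mul_monomial]
      have he : (Finsupp.single j 1 + (d - Finsupp.single j 1)) = d := by
        rw [add_comm]
        exact tsub_add_cancel_of_le (Finsupp.single_le_iff.mpr hpos)
      rw [he]
      congr 1
      push_cast
      ring
  rw [Finset.sum_congr rfl fun j _ => key j, ← Finset.sum_mul]
  congr 1
  rw [← map_sum]
  congr 1
  push_cast
  rfl

open MvPolynomial in
lemma euler {n m : ℕ} {P : MvPolynomial (Fin n) ℂ} (h : P.IsHomogeneous m) :
    ∑ j, (X j : MvPolynomial (Fin n) ℂ) * pderiv j P = C ((m : ℕ) : ℂ) * P := by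
  classical
  calc ∑ j, (X j : MvPolynomial (Fin n) ℂ) * pderiv j P
      = ∑ j, ∑ d ∈ P.support, (X j : MvPolynomial (Fin n) ℂ)
          * pderiv j (monomial d (coeff d P)) := by
        refine Finset.sum_congr rfl fun j _ => ?_
        conv_lhs => rw [P.as_sum]
        rw [map_sum, Finset.mul_sum]
    _ = ∑ d ∈ P.support, ∑ j, (X j : MvPolynomial (Fin n) ℂ)
          * pderiv j (monomial d (coeff d P)) := Finset.sum_comm
    _ = ∑ d ∈ P.support, C ((m : ℕ) : ℂ) * monomial d (coeff d P) := by
        refine Finset.sum_congr rfl fun d hd => ?_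
        rw [euler_monomial]
        have hc := h (MvPolynomial.mem_support_iff.mp hd)
        have hdm : (∑ j, d j : ℕ) = m := by
          rw [← hc, Finsupp.weight_apply, Finsupp.sum_fintype]
          · simp
          · intro i; simp
        rw [hdm]
    _ = C ((m : ℕ) : ℂ) * P := by rw [← Finset.mul_sum, ← P.as_sum]

open MvPolynomial

/-- any eigenvalue `λ` of the complex Laplacian
`(Lu)ₖ = (n − α − 1) uₖ + Σⱼ ((n − α − 2) ∂uₖ/∂zⱼ + ∂uⱼ/∂zₖ) zⱼ` on nonzero
`n`-tuples of homogeneous polynomials of degree `m ≥ 1` satisfies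
`Re λ ≥ 2(n − α − 2)`. -/
theorem stmt17 (n : ℕ) (hn : 2 ≤ n) (α : ℝ) (hα : α < 0) (m : ℕ) (hm : 1 ≤ m)
    (P : Fin n → MvPolynomial (Fin n) ℂ)
    (hhom : ∀ k, (P k).IsHomogeneous m)
    (hne : ∃ k, P k ≠ 0)
    (u : Fin n → (Fin n → ℂ) → ℂ)
    (hu : ∀ k z, u k z = MvPolynomial.eval z (P k))
    (lam : ℂ)
    (heig : ∀ k : Fin n, ∀ z : Fin n → ℂ,
      ((n : ℂ) - (α : ℂ) - 1) * u k z +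
          ∑ j, (((n : ℂ) - (α : ℂ) - 2) * wirtZ (u k) j z + wirtZ (u j) k z) * z j =
        lam * u k z) :
    2 * ((n : ℝ) - α - 2) ≤ lam.re := by
  classical
  have hufun : ∀ k, u k = fun z => MvPolynomial.eval z (P k) := fun k => funext (hu k)
  have heig' : ∀ (k : Fin n) (z : Fin n → ℂ),
      ((n : ℂ) - (α : ℂ) - 1) * MvPolynomial.eval z (P k) +
        ∑ j, (((n : ℂ) - (α : ℂ) - 2) * MvPolynomial.eval z (pderiv j (P k)) +
          MvPolynomial.eval z (pderiv k (P j))) * z j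
      = lam * MvPolynomial.eval z (P k) := by
    intro k z
    have h := heig k z
    simp only [hufun, wirtZ_eval] at h
    exact h
  have hpoly : ∀ k : Fin n,
      C ((n : ℂ) - (α : ℂ) - 1) * P k +
        ∑ j, (C ((n : ℂ) - (α : ℂ) - 2) * pderiv j (P k) + pderiv k (P j)) * X j
      = C lam * P k := by
    intro k
    apply MvPolynomial.funext
    intro z
    simp only [map_add, map_mul, map_sum, eval_C, eval_X]
    exact heig' k z
  have hkey : ∀ k : Fin n, ∑ j, (X j : MvPolynomial (Fin n) ℂ) * pderiv k (P j)
      = (C lam - C ((n : ℂ) - (α : ℂ) - 1)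
          - C ((m : ℕ) : ℂ) * C ((n : ℂ) - (α : ℂ) - 2)) * P k := by
    intro k
    have h1 := hpoly k
    have h2 := euler (hhom k)
    have h3 : ∑ j, (C ((n : ℂ) - (α : ℂ) - 2) * pderiv j (P k) + pderiv k (P j)) * X j
        = C ((n : ℂ) - (α : ℂ) - 2) * (∑ j, (X j : MvPolynomial (Fin n) ℂ) * pderiv j (P k))
          + ∑ j, (X j : MvPolynomial (Fin n) ℂ) * pderiv k (P j) := by
      rw [Finset.mul_sum, ← Finset.sum_add_distrib]
      exact Finset.sum_congr rfl fun j _ => by ring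
    rw [h3, h2] at h1
    linear_combination h1
  set S : MvPolynomial (Fin n) ℂ := ∑ j, X j * P j with hSdef
  have hSd : ∀ k : Fin n, pderiv k S = P k + ∑ j, (X j : MvPolynomial (Fin n) ℂ) * pderiv k (P j) := by
    intro k
    rw [hSdef, map_sum]
    simp only [pderiv_mul, pderiv_X, Pi.single_apply]
    rw [Finset.sum_add_distrib]
    congr 1
    simp only [ite_mul, one_mul, zero_mul]
    rw [Finset.sum_ite_eq' Finset.univ k P]
    simp
  have hShom : S.IsHomogeneous (m + 1) := by
    apply MvPolynomial.IsHomogeneous.sum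
    intro j _
    have := (MvPolynomial.isHomogeneous_X ℂ j).mul (hhom j)
    simpa [add_comm] using this
  have heulS := euler hShom
  -- pderiv k S = C (lam - c + 1) * P k
  set μ : ℂ := lam - (((n : ℂ) - (α : ℂ) - 1) + ((m : ℕ) : ℂ) * ((n : ℂ) - (α : ℂ) - 2)) with hμdef
  have hSd' : ∀ k : Fin n, pderiv k S = C (μ + 1) * P k := by
    intro k
    rw [hSd k, hkey k, hμdef]
    simp only [map_add, map_sub, map_mul, map_one, map_natCast, map_ofNat]
    ring
  have hCS : C (μ + 1) * S = C ((m : ℂ) + 1) * S := by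
    have h2 : (∑ j, (X j : MvPolynomial (Fin n) ℂ) * pderiv j S) = C (μ + 1) * S := by
      calc ∑ j, (X j : MvPolynomial (Fin n) ℂ) * pderiv j S
          = ∑ j, (X j : MvPolynomial (Fin n) ℂ) * (C (μ + 1) * P j) :=
            Finset.sum_congr rfl fun j _ => by rw [hSd' j]
        _ = C (μ + 1) * ∑ j, (X j : MvPolynomial (Fin n) ℂ) * P j := by
            rw [Finset.mul_sum]
            exact Finset.sum_congr rfl fun j _ => by ring
        _ = C (μ + 1) * S := by rw [← hSdef]
    rw [h2] at heulS
    push_cast at heulS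
    exact heulS
  set c : ℂ := ((n : ℂ) - (α : ℂ) - 1) + ((m : ℕ) : ℂ) * ((n : ℂ) - (α : ℂ) - 2) with hcdef
  have hlam : lam = c + (m : ℂ) ∨ lam = c - 1 := by
    by_cases hS0 : S = 0
    · right
      obtain ⟨k, hk⟩ := hne
      have h := hSd' k
      rw [hS0, map_zero] at h
      rcases mul_eq_zero.mp h.symm with h1 | h1
      · have h2 : μ + 1 = 0 := MvPolynomial.C_eq_zero.mp h1
        rw [hμdef] at h2
        rw [hcdef]
        linear_combination h2
      · exact absurd h1 hk
    · left
      have h : (C (μ + 1) - C ((m : ℂ) + 1)) * S = 0 := by linear_combination hCS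
      rw [← map_sub] at h
      rcases mul_eq_zero.mp h with h1 | h1
      · have h2 : μ + 1 - ((m : ℂ) + 1) = 0 := MvPolynomial.C_eq_zero.mp h1
        rw [hμdef] at h2
        rw [hcdef]
        linear_combination h2
      · exact absurd h1 hS0
  have hn' : (2 : ℝ) ≤ (n : ℝ) := by exact_mod_cast hn
  have hm' : (1 : ℝ) ≤ (m : ℝ) := by exact_mod_cast hm
  rcases hlam with h | h
  · have hre : lam.re = ((n : ℝ) - α - 1) + (m : ℝ) * ((n : ℝ) - α - 2) + (m : ℝ) := by
      rw [h, hcdef]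
      simp [Complex.add_re, Complex.sub_re, Complex.mul_re]
    rw [hre]
    nlinarith
  · have hre : lam.re = ((n : ℝ) - α - 1) + (m : ℝ) * ((n : ℝ) - α - 2) - 1 := by
      rw [h, hcdef]
      simp [Complex.add_re, Complex.sub_re, Complex.mul_re]
    rw [hre]
    nlinarith
end
end

section
/- Let n ≥ 2 and let h̃ : [0,∞) → ℝ be smooth with h̃'(r) > 0 and h̃'(r) + r h̃''(r) > 0 for all r ≥ 0, and let φ̃ : [0,∞) → ℝ be smooth and positive. Then for each j ∈ {1,…,n} the function z ↦ φ̃'(|z|²) z_j / (h̃'(|z|²) + |z|² h̃''(|z|²)) is holomorphic on ℂⁿ if and only if there exist real constants A and B with φ̃(r) = A + B r h̃'(r) for all r ≥ 0. (The displayed function is the j-th component of the gradient field (∂̄φ)^♯ of φ(z) = φ̃(|z|²) with respect to the U(n)-invariant Kähler metric with potential h̃(|z|²); its holomorphicity characterizes when the conformal metric g = φ^{-1} h has holomorphic torsion.) -/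
open Complex MeasureTheory Finset

noncomputable section

/-- A real-valued entire function is constant. -/
lemma im_zero_entire_const {f : ℂ → ℂ} (hf : Differentiable ℂ f)
    (him : ∀ w, (f w).im = 0) (w w' : ℂ) : f w = f w' := by
  apply is_const_of_deriv_eq_zero hf _ w w'
  intro x
  set d := deriv f x with hd
  have hfd : HasDerivAt f d x := (hf x).hasDerivAt
  have key : ∀ v : ℂ, (v * d).im = 0 := by
    intro v
    have hline : HasDerivAt (fun t : ℝ => x + ↑t * v) v 0 := by
      simpa using ((Complex.ofRealCLM.hasDerivAt (x := (0 : ℝ))).mul_const v).const_add x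
    have hfd' : HasDerivAt f d ((fun t : ℝ => x + ↑t * v) 0) := by simpa using hfd
    have hcomp : HasDerivAt (fun t : ℝ => f (x + ↑t * v)) (v • d) 0 := by
      exact hfd'.scomp (x := (0 : ℝ)) hline
    have him' : HasDerivAt (fun t : ℝ => (f (x + ↑t * v)).im) ((v • d).im) 0 := by
      exact Complex.imCLM.hasFDerivAt.comp_hasDerivAt 0 hcomp
    have hz : (fun t : ℝ => (f (x + ↑t * v)).im) = fun _ => (0 : ℝ) :=
      funext fun t => him _
    rw [hz] at him'
    have := him'.unique (hasDerivAt_const 0 0)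
    simpa using this
  have hi1 : d.im = 0 := by simpa using key 1
  have hr1 : d.re = 0 := by simpa [Complex.mul_im] using key I
  show d = 0
  exact Complex.ext hr1 hi1

/-- `|z|² = Σ |zₖ|²` for `z ∈ ℂⁿ`. -/
def normSq' {n : ℕ} (z : Fin n → ℂ) : ℝ := ∑ i, Complex.normSq (z i)

/-- for the `U(n)`-invariant Kähler metric with radial potential
`h̃(|z|²)` and a radial positive conformal factor `φ(z) = φ̃(|z|²)`, the
components `φ̃'(|z|²) zⱼ / (h̃'(|z|²) + |z|² h̃''(|z|²))` of `(∂̄φ)^♯` are all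
entire iff `φ̃(r) = A + B r h̃'(r)` for real constants `A, B`. -/
theorem stmt18 (n : ℕ) (hn : 2 ≤ n) (ht : ℝ → ℝ)
    (hht : ContDiff ℝ (⊤ : ℕ∞) ht)
    (h1 : ∀ r : ℝ, 0 ≤ r → 0 < deriv ht r)
    (h2 : ∀ r : ℝ, 0 ≤ r → 0 < deriv ht r + r * deriv (deriv ht) r)
    (φt : ℝ → ℝ) (hφt : ContDiff ℝ (⊤ : ℕ∞) φt)
    (hφpos : ∀ r : ℝ, 0 ≤ r → 0 < φt r) :
    (∀ j : Fin n,
      Differentiable ℂ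
        (fun z : Fin n → ℂ =>
          ((deriv φt (normSq' z) : ℝ) : ℂ) * z j /
            ((deriv ht (normSq' z) +
              normSq' z * deriv (deriv ht) (normSq' z) : ℝ) : ℂ))) ↔
      ∃ A B : ℝ, ∀ r : ℝ, 0 ≤ r → φt r = A + B * (r * deriv ht r) := by
  classical
  obtain ⟨hhtd, hht'⟩ := contDiff_infty_iff_deriv.mp hht
  obtain ⟨hht'd, hht''⟩ := contDiff_infty_iff_deriv.mp hht'
  obtain ⟨hφtd, hφt'⟩ := contDiff_infty_iff_deriv.mp hφt
  set D : ℝ → ℝ := fun r => deriv ht r + r * deriv (deriv ht) r with hDdef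
  constructor
  · intro H
    set g : ℝ → ℝ := fun r => deriv φt r / D r with hgdef
    -- Step 1: g is constant on (0, ∞)
    have step1 : ∀ a b : ℝ, 0 < a → a ≤ b → g a = g b := by
      intro a b ha hab
      have h0n : 0 < n := by omega
      have h1n : 1 < n := by omega
      set j : Fin n := ⟨0, h0n⟩
      set k : Fin n := ⟨1, h1n⟩
      have hjk : j ≠ k := by simp [j, k, Fin.ext_iff]
      set c : ℂ := ((Real.sqrt a : ℝ) : ℂ) with hcdef
      have hc : Complex.normSq c = a := by
        simp [hcdef, Complex.normSq_ofReal, Real.mul_self_sqrt ha.le]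
      have hc0 : c ≠ 0 := by
        simp [hcdef, Complex.ofReal_eq_zero]
        positivity
      set L : ℂ → Fin n → ℂ := fun w i => if i = j then c else if i = k then w else 0
        with hLdef
      have hLd : Differentiable ℂ L := by
        rw [differentiable_pi]
        intro i
        by_cases hij : i = j
        · simpa [hLdef, hij] using differentiable_const c
        · by_cases hik : i = k
          · simpa [hLdef, hij, hik, Ne.symm hjk] using (differentiable_id' : Differentiable ℂ fun w : ℂ => w)
          · simpa [hLdef, hij, hik] using differentiable_const (0 : ℂ)
      have hnorm : ∀ w : ℂ, normSq' (L w) = a + Complex.normSq w := by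
        intro w
        unfold normSq'
        have hsum : ∀ i : Fin n, Complex.normSq (L w i) =
            (if i = j then a else 0) + (if i = k then Complex.normSq w else 0) := by
          intro i
          by_cases hij : i = j
          · simp [hLdef, hij, hjk, hc]
          · by_cases hik : i = k
            · simp [hLdef, hij, hik, Ne.symm hjk]
            · simp [hLdef, hij, hik]
        rw [Finset.sum_congr rfl fun i _ => hsum i, Finset.sum_add_distrib]
        simp
      set F : ℂ → ℂ := fun w =>
        (((deriv φt (normSq' (L w)) : ℝ) : ℂ) * (L w j) /
          ((deriv ht (normSq' (L w)) +
            normSq' (L w) * deriv (deriv ht) (normSq' (L w)) : ℝ) : ℂ)) / c with hFdef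
      have hFval : ∀ w : ℂ, F w = ((g (a + Complex.normSq w) : ℝ) : ℂ) := by
        intro w
        have hLwj : L w j = c := by simp [hLdef]
        rw [hFdef]
        simp only [hLwj, hnorm w]
        rw [mul_comm, mul_div_assoc, mul_div_cancel_left₀ _ hc0, hgdef, hDdef]
        push_cast
        ring
      have hFd : Differentiable ℂ F := ((H j).comp hLd).div_const c
      have hFim : ∀ w, (F w).im = 0 := by
        intro w; rw [hFval w]; exact Complex.ofReal_im _
      have := im_zero_entire_const hFd hFim ((Real.sqrt (b - a) : ℝ) : ℂ) 0
      rw [hFval, hFval] at this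
      have hval : g (a + Complex.normSq ((Real.sqrt (b - a) : ℝ) : ℂ)) = g (a + Complex.normSq 0) :=
        Complex.ofReal_inj.mp this
      have hba : (0:ℝ) ≤ b - a := by linarith
      rw [Complex.normSq_ofReal, Real.mul_self_sqrt hba] at hval
      simpa using hval.symm
    set B : ℝ := g 1 with hBdef
    have step2 : ∀ r : ℝ, 0 < r → g r = B := by
      intro r hr
      have e1 := step1 r (r + 1) hr (by linarith)
      have e2 := step1 1 (r + 1) one_pos (by linarith)
      rw [e1, ← e2]
    have hDcont : Continuous D := by
      exact hht'.continuous.add (continuous_id.mul hht''.continuous)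
    have step0 : g 0 = B := by
      have hgc : ContinuousAt g 0 := by
        exact (hφt'.continuous.continuousAt).div hDcont.continuousAt (h2 0 le_rfl).ne'
      have t1 : Filter.Tendsto g (nhdsWithin 0 (Set.Ioi 0)) (nhds (g 0)) :=
        hgc.tendsto.mono_left nhdsWithin_le_nhds
      have heq : (fun _ : ℝ => B) =ᶠ[nhdsWithin 0 (Set.Ioi 0)] g :=
        Filter.eventually_of_mem self_mem_nhdsWithin fun r hr => (step2 r hr).symm
      have t2 : Filter.Tendsto g (nhdsWithin 0 (Set.Ioi 0)) (nhds B) :=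
        Filter.Tendsto.congr' heq tendsto_const_nhds
      exact tendsto_nhds_unique t1 t2
    have hderiv : ∀ r : ℝ, 0 ≤ r → deriv φt r = B * D r := by
      intro r hr
      have hgr : g r = B := by
        rcases hr.eq_or_lt with h | h
        · rw [← h]; exact step0
        · exact step2 r h
      have hDr : D r ≠ 0 := (h2 r hr).ne'
      have := (div_eq_iff hDr).mp hgr
      exact this
    refine ⟨φt 0, B, ?_⟩
    intro r hr
    set ψ : ℝ → ℝ := fun x => φt x - B * (x * deriv ht x) with hψdef
    have hψd : ∀ x : ℝ, 0 ≤ x → HasDerivAt ψ 0 x := by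
      intro x hx
      have hφx : HasDerivAt φt (deriv φt x) x := (hφtd x).hasDerivAt
      have hhx : HasDerivAt (fun y : ℝ => y * deriv ht y)
          (1 * deriv ht x + x * deriv (deriv ht) x) x :=
        (hasDerivAt_id x).mul (hht'd x).hasDerivAt
      have := hφx.sub ((hhx.const_mul B))
      have hz : deriv φt x - B * (1 * deriv ht x + x * deriv (deriv ht) x) = 0 := by
        rw [hderiv x hx, hDdef]; ring
      rw [hz] at this
      exact this
    have hcont : ContinuousOn ψ (Set.Icc 0 r) := by
      apply Continuous.continuousOn
      exact hφt.continuous.sub (continuous_const.mul (continuous_id.mul hht'.continuous))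
    have key := constant_of_has_deriv_right_zero hcont
      (fun x hx => (hψd x hx.1).hasDerivWithinAt) r (Set.mem_Icc.mpr ⟨hr, le_rfl⟩)
    have h' : φt r - B * (r * deriv ht r) = φt 0 - B * (0 * deriv ht 0) := key
    simp only [zero_mul, mul_zero, sub_zero] at h'
    linarith
  · rintro ⟨A, B, hAB⟩ j
    have hkey : (fun z : Fin n → ℂ =>
        ((deriv φt (normSq' z) : ℝ) : ℂ) * z j /
          ((deriv ht (normSq' z) +
            normSq' z * deriv (deriv ht) (normSq' z) : ℝ) : ℂ)) =
        fun z : Fin n → ℂ => ((B : ℝ) : ℂ) * z j := by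
      funext z
      have hr0 : 0 ≤ normSq' z := Finset.sum_nonneg fun i _ => Complex.normSq_nonneg _
      rcases hr0.eq_or_lt with h | h
      · have hz : z j = 0 := by
          have := (Finset.sum_eq_zero_iff_of_nonneg
            (fun i _ => Complex.normSq_nonneg (z i))).mp h.symm j (Finset.mem_univ j)
          exact Complex.normSq_eq_zero.mp this
        simp [hz]
      · set r : ℝ := normSq' z with hrdef
        have hDr : D r ≠ 0 := (h2 r hr0).ne'
        have heq : φt =ᶠ[nhds r] fun x => A + B * (x * deriv ht x) :=
          Filter.eventually_of_mem (Ici_mem_nhds h) fun x hx => hAB x hx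
        have hχ : HasDerivAt (fun x : ℝ => A + B * (x * deriv ht x))
            (B * (1 * deriv ht r + r * deriv (deriv ht) r)) r :=
          (((hasDerivAt_id r).mul (hht'd r).hasDerivAt).const_mul B).const_add A
        have hdφ : deriv φt r = B * D r := by
          rw [heq.deriv_eq, hχ.deriv, hDdef]; ring
        show ((deriv φt r : ℝ) : ℂ) * z j / ((D r : ℝ) : ℂ) = ((B : ℝ) : ℂ) * z j
        rw [hdφ]
        have hDC : ((D r : ℝ) : ℂ) ≠ 0 := by
          simpa [Complex.ofReal_eq_zero] using hDr
        push_cast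
        field_simp
    rw [hkey]
    exact (differentiable_const _).mul (ContinuousLinearMap.proj j :
      (Fin n → ℂ) →L[ℂ] ℂ).differentiable
end
end

section
/- Let n ≥ 1, let h̃ : [0,∞) → ℝ be smooth with h̃'(r) > 0 and h̃'(r) + r h̃''(r) > 0 for all r ≥ 0, and let σ̃, ψ̃ : [0,∞) → ℝ be smooth. Then for each j ∈ {1,…,n} the function z ↦ ((ψ̃'(|z|²) − (n − 1) σ̃'(|z|²)) / (e^{σ̃(|z|²)} (h̃'(|z|²) + |z|² h̃''(|z|²)))) · z_j is holomorphic on ℂⁿ if and only if there exist real constants C₁ and C̃ such that ψ̃(r) = (n − 1) σ̃(r) + C₁ ∫₀^r e^{σ̃(s)} (h̃'(s) + s h̃''(s)) ds + C̃ for all r ≥ 0. (The displayed function is the j-th component of the vector field (∂̄ψ − τ̄)^♯ for the conformally Kähler metric g_{j k̄} = e^{σ̃(|z|²)} ∂_j ∂_{k̄} h̃(|z|²) with radial weight ψ(z) = ψ̃(|z|²), where τ is the torsion (1,0)-form of g.) -/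
open Complex MeasureTheory Finset

noncomputable section

/-- for the conformally `U(n)`-invariant Kähler metric
`g = e^{σ̃(|z|²)} ∂∂̄ h̃(|z|²)` on `ℂⁿ` with radial weight `ψ(z) = ψ̃(|z|²)`, the
components `((ψ̃' − (n−1)σ̃')/(e^{σ̃}(h̃' + r h̃''))) zⱼ` of `(∂̄ψ − τ̄)^♯` are
all entire iff
`ψ̃(r) = (n−1) σ̃(r) + C₁ ∫₀^r e^{σ̃(s)}(h̃'(s) + s h̃''(s)) ds + C̃`. -/
theorem stmt19 (n : ℕ) (hn : 1 ≤ n) (ht : ℝ → ℝ)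
    (hht : ContDiff ℝ (⊤ : ℕ∞) ht)
    (h1 : ∀ r : ℝ, 0 ≤ r → 0 < deriv ht r)
    (h2 : ∀ r : ℝ, 0 ≤ r → 0 < deriv ht r + r * deriv (deriv ht) r)
    (σt : ℝ → ℝ) (hσt : ContDiff ℝ (⊤ : ℕ∞) σt)
    (ψt : ℝ → ℝ) (hψt : ContDiff ℝ (⊤ : ℕ∞) ψt) :
    (∀ j : Fin n,
      Differentiable ℂ
        (fun z : Fin n → ℂ =>
          (((deriv ψt (normSq' z) - ((n : ℝ) - 1) * deriv σt (normSq' z)) /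
              (Real.exp (σt (normSq' z)) *
                (deriv ht (normSq' z) +
                  normSq' z * deriv (deriv ht) (normSq' z))) : ℝ) : ℂ) * z j)) ↔
      ∃ C₁ C' : ℝ, ∀ r : ℝ, 0 ≤ r →
        ψt r = ((n : ℝ) - 1) * σt r +
          C₁ * (∫ s in (0 : ℝ)..r,
            Real.exp (σt s) * (deriv ht s + s * deriv (deriv ht) s)) + C' := by
  classical
  -- basic regularity facts
  have hht1 : ContDiff ℝ (⊤ : ℕ∞) (deriv ht) := (contDiff_infty_iff_deriv.mp hht).2
  have hht2 : Continuous (deriv (deriv ht)) :=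
    (contDiff_infty_iff_deriv.mp hht1).2.continuous
  have hσd : Differentiable ℝ σt := (contDiff_infty_iff_deriv.mp hσt).1
  have hσ1 : Continuous (deriv σt) := (contDiff_infty_iff_deriv.mp hσt).2.continuous
  have hψd : Differentiable ℝ ψt := (contDiff_infty_iff_deriv.mp hψt).1
  have hψ1 : Continuous (deriv ψt) := (contDiff_infty_iff_deriv.mp hψt).2.continuous
  set w : ℝ → ℝ := fun r => Real.exp (σt r) * (deriv ht r + r * deriv (deriv ht) r)
    with hw
  have hwcont : Continuous w := by
    exact (Real.continuous_exp.comp hσt.continuous).mul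
      (hht1.continuous.add (continuous_id.mul hht2))
  have hwpos : ∀ r : ℝ, 0 ≤ r → 0 < w r := fun r hr =>
    mul_pos (Real.exp_pos _) (h2 r hr)
  -- derivative of the integral
  have hI : ∀ r : ℝ, HasDerivAt (fun u => ∫ s in (0 : ℝ)..u, w s) (w r) r := by
    intro r
    exact intervalIntegral.integral_hasDerivAt_right
      (hwcont.intervalIntegrable _ _)
      (hwcont.stronglyMeasurableAtFilter _ _)
      hwcont.continuousAt
  have hN0 : ∀ z : Fin n → ℂ, 0 ≤ normSq' z := fun z =>
    Finset.sum_nonneg fun i _ => Complex.normSq_nonneg _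
  constructor
  · -- forward direction
    intro hdiff
    set j : Fin n := ⟨0, hn⟩
    set F : ℝ → ℝ := fun r =>
      (deriv ψt r - ((n : ℝ) - 1) * deriv σt r) / w r with hF
    -- the one-variable slice is entire
    have hsingle : Differentiable ℂ (fun u : ℂ => (Pi.single j u : Fin n → ℂ)) := by
      rw [differentiable_pi]
      intro i
      by_cases h : i = j
      · subst h; simpa using differentiable_id
      · simp only [Pi.single_apply, if_neg h]
        exact differentiable_const _
    have hNs : ∀ u : ℂ, normSq' (Pi.single j u) = Complex.normSq u := by
      intro u
      unfold normSq'
      rw [Finset.sum_eq_single j]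
      · simp
      · intro i _ hij
        simp [Pi.single_apply, hij]
      · simp
    have hg : Differentiable ℂ (fun u : ℂ => ((F (Complex.normSq u) : ℝ) : ℂ) * u) := by
      have := (hdiff j).comp hsingle
      intro x
      refine (this x).congr_of_eventuallyEq (Filter.Eventually.of_forall fun u => ?_)
      simp [hNs u, hF, hw]
    -- identity theorem: g(u) - F 1 * u vanishes on the unit circle, hence everywhere
    set c : ℂ := ((F 1 : ℝ) : ℂ) with hc
    have hh : Differentiable ℂ (fun u : ℂ => ((F (Complex.normSq u) : ℝ) : ℂ) * u - c * u) :=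
      hg.sub ((differentiable_const _).mul differentiable_id)
    have hhan : AnalyticOnNhd ℂ
        (fun u : ℂ => ((F (Complex.normSq u) : ℝ) : ℂ) * u - c * u) Set.univ :=
      analyticOnNhd_univ_iff_differentiable.mpr hh
    -- sequence on the unit circle tending to 1
    set u : ℕ → ℂ := fun k => Complex.exp (((1 : ℝ) / (k + 1) : ℝ) * Complex.I) with hu
    have hunormSq : ∀ k, Complex.normSq (u k) = 1 := by
      intro k
      have : ‖u k‖ = 1 := by
        rw [hu]; simp [Complex.norm_exp]
      rw [Complex.normSq_eq_norm_sq, this]; norm_num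
    have huzero : ∀ k, ((F (Complex.normSq (u k)) : ℝ) : ℂ) * u k - c * u k = 0 := by
      intro k; rw [hunormSq k, hc]; ring
    have hune : ∀ k : ℕ, u k ≠ 1 := by
      intro k h
      have him : (u k).im = Real.sin ((1 : ℝ) / (k + 1)) := by
        rw [hu]
        exact Complex.exp_ofReal_mul_I_im _
      have hpos : (0 : ℝ) < 1 / (k + 1 : ℝ) := by positivity
      have hlt : (1 : ℝ) / (k + 1 : ℝ) < Real.pi := by
        have : (1 : ℝ) / (k + 1 : ℝ) ≤ 1 := by
          rw [div_le_one (by positivity)]; linarith [Nat.cast_nonneg (α := ℝ) k]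
        linarith [Real.pi_gt_three]
      have : (u k).im > 0 := by
        rw [him]; exact Real.sin_pos_of_pos_of_lt_pi hpos hlt
      rw [h] at this; simp at this
    have hutend : Filter.Tendsto u Filter.atTop (nhdsWithin 1 {(1 : ℂ)}ᶜ) := by
      apply tendsto_nhdsWithin_of_tendsto_nhds_of_eventually_within
      · have h0 : Filter.Tendsto (fun k : ℕ => ((1 : ℝ) / (k + 1) : ℝ)) Filter.atTop (nhds 0) :=
          tendsto_one_div_add_atTop_nhds_zero_nat
        have : Filter.Tendsto (fun k : ℕ => (((1 : ℝ) / (k + 1) : ℝ) : ℂ) * Complex.I)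
            Filter.atTop (nhds 0) := by
          have := ((Complex.continuous_ofReal.tendsto 0).comp h0).mul_const Complex.I
          simpa using this
        have := (Complex.continuous_exp.tendsto 0).comp this
        simpa [hu, Function.comp_def] using this
      · exact Filter.Eventually.of_forall fun k => hune k
    have hfreq : ∃ᶠ z in nhdsWithin 1 {(1 : ℂ)}ᶜ,
        ((F (Complex.normSq z) : ℝ) : ℂ) * z - c * z = 0 :=
      hutend.frequently (Filter.Frequently.of_forall huzero)
    have hEq : Set.EqOn (fun z : ℂ => ((F (Complex.normSq z) : ℝ) : ℂ) * z - c * z) 0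
        Set.univ :=
      hhan.eqOn_zero_of_preconnected_of_frequently_eq_zero isPreconnected_univ
        (Set.mem_univ _) hfreq
    -- hence F r = F 1 for all r > 0
    have hFconst : ∀ r : ℝ, 0 < r → F r = F 1 := by
      intro r hr
      have hz : (Real.sqrt r : ℂ) ≠ 0 := by
        simp [Complex.ofReal_eq_zero, Real.sqrt_eq_zero', not_le, hr]
      have hns : Complex.normSq ((Real.sqrt r : ℝ) : ℂ) = r := by
        rw [Complex.normSq_ofReal, Real.mul_self_sqrt hr.le]
      have := hEq (Set.mem_univ ((Real.sqrt r : ℝ) : ℂ))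
      simp only [hns, Pi.zero_apply, sub_eq_zero] at this
      have h' : ((F r : ℝ) : ℂ) = c := mul_right_cancel₀ hz this
      rw [hc] at h'
      exact_mod_cast h'
    set C₁ : ℝ := F 1 with hC₁
    -- the derivative identity on (0,∞)
    have hDer : ∀ r : ℝ, 0 < r →
        deriv ψt r - ((n : ℝ) - 1) * deriv σt r - C₁ * w r = 0 := by
      intro r hr
      have hw0 : w r ≠ 0 := (hwpos r hr.le).ne'
      have := hFconst r hr
      rw [hF] at this
      field_simp at this
      linarith [this]
    -- and at 0, by continuity
    have hDcont : Continuous (fun r => deriv ψt r - ((n : ℝ) - 1) * deriv σt r - C₁ * w r) :=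
      (hψ1.sub (continuous_const.mul hσ1)).sub (continuous_const.mul hwcont)
    have hDer0 : deriv ψt 0 - ((n : ℝ) - 1) * deriv σt 0 - C₁ * w 0 = 0 := by
      have hseq : Filter.Tendsto (fun k : ℕ => ((1 : ℝ) / (k + 1) : ℝ)) Filter.atTop (nhds 0) :=
        tendsto_one_div_add_atTop_nhds_zero_nat
      have h₁ := (hDcont.tendsto 0).comp hseq
      have h₂ : (fun k : ℕ => deriv ψt ((1:ℝ)/(k+1)) - ((n : ℝ) - 1) * deriv σt ((1:ℝ)/(k+1))
          - C₁ * w ((1:ℝ)/(k+1))) = fun _ => (0 : ℝ) := by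
        funext k
        exact hDer _ (by positivity)
      rw [show ((fun r => deriv ψt r - ((n : ℝ) - 1) * deriv σt r - C₁ * w r) ∘
        (fun k : ℕ => ((1 : ℝ) / (k + 1) : ℝ))) = fun _ => (0:ℝ) from h₂] at h₁
      exact (tendsto_nhds_unique tendsto_const_nhds h₁).symm
    have hDerAll : ∀ r : ℝ, 0 ≤ r →
        deriv ψt r - ((n : ℝ) - 1) * deriv σt r - C₁ * w r = 0 := by
      intro r hr
      rcases eq_or_lt_of_le hr with h | h
      · rw [← h]; exact hDer0
      · exact hDer r h
    -- integrate: G is constant on [0,∞)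
    set G : ℝ → ℝ := fun r => ψt r - ((n : ℝ) - 1) * σt r -
      C₁ * ∫ s in (0 : ℝ)..r, w s with hG
    have hGder : ∀ r : ℝ, HasDerivAt G
        (deriv ψt r - ((n : ℝ) - 1) * deriv σt r - C₁ * w r) r := by
      intro r
      exact (((hψd r).hasDerivAt).sub (((hσd r).hasDerivAt).const_mul _)).sub
        ((hI r).const_mul _)
    have hGconst : ∀ r : ℝ, 0 ≤ r → G r = G 0 := by
      intro r hr
      rcases eq_or_lt_of_le hr with h | h
      · rw [← h]
      · refine constant_of_derivWithin_zero (a := 0) (b := r)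
          (fun x _ => ((hGder x).differentiableAt).differentiableWithinAt) ?_ r
          (Set.mem_Icc.mpr ⟨hr, le_refl r⟩)
        intro x hx
        rw [((hGder x).differentiableAt).derivWithin (uniqueDiffOn_Icc h x
          (Set.mem_Icc.mpr ⟨hx.1, hx.2.le⟩))]
        rw [(hGder x).deriv]
        exact hDerAll x hx.1
    refine ⟨C₁, ψt 0 - ((n : ℝ) - 1) * σt 0, fun r hr => ?_⟩
    have h0 := hGconst r hr
    rw [hG] at h0
    simp only [intervalIntegral.integral_same, mul_zero, sub_zero] at h0
    linarith [h0]
  · -- backward direction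
    rintro ⟨C₁, C', hψ⟩ j
    -- the derivative identity on [0,∞)
    set Φ : ℝ → ℝ := fun r => ((n : ℝ) - 1) * σt r +
      C₁ * (∫ s in (0 : ℝ)..r, w s) + C' with hΦ
    have hΦder : ∀ r : ℝ, HasDerivAt Φ (((n : ℝ) - 1) * deriv σt r + C₁ * w r) r := by
      intro r
      exact ((((hσd r).hasDerivAt).const_mul _).add ((hI r).const_mul _)).add_const _
    have hkey : ∀ r : ℝ, 0 ≤ r → deriv ψt r = ((n : ℝ) - 1) * deriv σt r + C₁ * w r := by
      intro r hr
      have h₁ : deriv ψt r = derivWithin ψt (Set.Ici 0) r :=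
        ((hψd r).derivWithin (uniqueDiffOn_Ici 0 r hr)).symm
      have h₂ : derivWithin ψt (Set.Ici 0) r = derivWithin Φ (Set.Ici 0) r := by
        apply derivWithin_congr
        · intro x hx; exact hψ x hx
        · exact hψ r hr
      have h₃ : derivWithin Φ (Set.Ici 0) r = ((n : ℝ) - 1) * deriv σt r + C₁ * w r := by
        rw [((hΦder r).differentiableAt).derivWithin (uniqueDiffOn_Ici 0 r hr)]
        exact (hΦder r).deriv
      rw [h₁, h₂, h₃]
    -- so the coefficient is the constant C₁
    have hcoef : ∀ z : Fin n → ℂ,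
        (deriv ψt (normSq' z) - ((n : ℝ) - 1) * deriv σt (normSq' z)) /
          (Real.exp (σt (normSq' z)) * (deriv ht (normSq' z) +
            normSq' z * deriv (deriv ht) (normSq' z))) = C₁ := by
      intro z
      have hr := hN0 z
      rw [hkey _ hr]
      have hw0 : w (normSq' z) ≠ 0 := (hwpos _ hr).ne'
      rw [hw] at hw0 ⊢
      have hX : deriv ht (normSq' z) + normSq' z * deriv (deriv ht) (normSq' z) ≠ 0 :=
        (h2 _ hr).ne'
      field_simp
      ring
    have : (fun z : Fin n → ℂ =>
          (((deriv ψt (normSq' z) - ((n : ℝ) - 1) * deriv σt (normSq' z)) /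
              (Real.exp (σt (normSq' z)) *
                (deriv ht (normSq' z) +
                  normSq' z * deriv (deriv ht) (normSq' z))) : ℝ) : ℂ) * z j)
        = fun z : Fin n → ℂ => ((C₁ : ℝ) : ℂ) * z j := by
      funext z
      rw [hcoef z]
    rw [this]
    exact (differentiable_const _).mul (differentiable_pi.mp differentiable_id j)
end
end
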